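/- Let G be a finite connected simple graph and v a vertex of G. In the game Vicious Trap, the first player starting from v loses (i.e., the second player has a winning strategy) if and only if v is contained in every maximum-cardinality independent set of G. -/

import Mathlib

/-!
Vicious Trap: a token moves along edges of `G` to previously unvisited,
undeleted vertices; after moving, the mover may delete any subset of the
vertices he could have just moved to instead (neighbors of the previous
position, unvisited and undeleted, other than the new position).  A player
who cannot move loses.  The state is a pair (history of visited vertices,
newest first; set of deleted vertices).  The first player moves at
histories of odd length.
-/

variable {V : Type*}

/-- A move to `w` is legal from history `h` with deleted set `D` if `w` is
adjacent to the current vertex, unvisited and undeleted. -/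
def VTrapLegal (G : SimpleGraph V) (h : List V) (D : Set V) (w : V) : Prop :=
  ∃ c, h.head? = some c ∧ G.Adj c w ∧ w ∉ h ∧ w ∉ D

open Classical in
/-- The evolution of Vicious Trap: a strategy chooses, from the current state,
a vertex to move to together with a set of vertices to delete; only the legal
part of the deletion request (alternative legal moves, other than the chosen
vertex) is executed.  If the chosen move is illegal the state freezes. -/
noncomputable def vtrapPlay (G : SimpleGraph V) (σ τ : List V → Set V → V × Set V) (v : V) :
    ℕ → List V × Set V
  | 0 => ([v], ∅)
  | n + 1 =>
    let s := vtrapPlay G σ τ v n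
    let m := if s.1.length % 2 = 1 then σ s.1 s.2 else τ s.1 s.2
    if VTrapLegal G s.1 s.2 m.1 then
      (m.1 :: s.1, s.2 ∪ (m.2 ∩ {x | VTrapLegal G s.1 s.2 x ∧ x ≠ m.1}))
    else s

/-- The first player has a winning strategy in Vicious Trap. -/
def VTrapFirstWins (G : SimpleGraph V) (v : V) : Prop :=
  ∃ σ, ∀ τ, ∃ n : ℕ,
    (vtrapPlay G σ τ v n).1.length % 2 = 0 ∧
    ¬ VTrapLegal G (vtrapPlay G σ τ v n).1 (vtrapPlay G σ τ v n).2
      ((τ (vtrapPlay G σ τ v n).1 (vtrapPlay G σ τ v n).2).1)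

/-- The second player has a winning strategy in Vicious Trap. -/
def VTrapSecondWins (G : SimpleGraph V) (v : V) : Prop :=
  ∃ τ, ∀ σ, ∃ n : ℕ,
    (vtrapPlay G σ τ v n).1.length % 2 = 1 ∧
    ¬ VTrapLegal G (vtrapPlay G σ τ v n).1 (vtrapPlay G σ τ v n).2
      ((σ (vtrapPlay G σ τ v n).1 (vtrapPlay G σ τ v n).2).1)

/-- `I` is an independent set of `G`. -/
def IsIndep (G : SimpleGraph V) (I : Set V) : Prop :=
  ∀ a ∈ I, ∀ b ∈ I, ¬ G.Adj a b

/-- `I` is a maximum-cardinality independent set of `G`. -/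
def IsMaxIndep (G : SimpleGraph V) (I : Set V) : Prop :=
  IsIndep G I ∧ ∀ J : Set V, IsIndep G J → J.ncard ≤ I.ncard

def VTIndepOn (G : SimpleGraph V) (T I : Set V) : Prop := I ⊆ T ∧ IsIndep G I

def VTMaxIndepOn (G : SimpleGraph V) (T I : Set V) : Prop :=
  VTIndepOn G T I ∧ ∀ J, VTIndepOn G T J → J.ncard ≤ I.ncard

def VTAcond (G : SimpleGraph V) (c : V) (S : Set V) : Prop :=
  ∀ I, VTMaxIndepOn G ({c} ∪ S) I → c ∈ I

def VTBcond (G : SimpleGraph V) (c : V) (S : Set V) : Prop :=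
  ∃ I, VTMaxIndepOn G ({c} ∪ S) I ∧ c ∉ I

lemma vt_exists_max [Fintype V] (G : SimpleGraph V) (T : Set V) :
    ∃ I, VTMaxIndepOn G T I := by
  obtain ⟨I, hI, hmax⟩ := Set.Finite.exists_maximalFor Set.ncard
      {I | VTIndepOn G T I} (Set.toFinite _)
      ⟨∅, Set.empty_subset _, by intro a ha; simp at ha⟩
  refine ⟨I, hI, fun J hJ => ?_⟩
  by_contra h
  push_neg at h
  exact absurd (hmax hJ h.le) (not_le.mpr h)

lemma vt_Acond_step [Fintype V] {G : SimpleGraph V} {c w : V} {S D : Set V}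
    (hA : VTAcond G c S) (hc : c ∉ S) (hw : w ∈ S) (hadj : G.Adj c w)
    (hD : ∀ x ∈ D, G.Adj c x) (hwD : w ∉ D) :
    VTBcond G w (S \ ({w} ∪ D)) := by
  obtain ⟨I0, hI0⟩ := vt_exists_max G ({c} ∪ S)
  have hcI : c ∈ I0 := hA I0 hI0
  have hNI0 : ∀ x ∈ I0, x ≠ c → ¬ G.Adj c x := fun x hx _ => hI0.1.2 c hcI x hx
  have hTeq : {w} ∪ (S \ ({w} ∪ D)) = S \ D := by
    ext x
    simp only [Set.mem_union, Set.mem_diff, Set.mem_singleton_iff]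
    constructor
    · rintro (rfl | ⟨hxS, hx⟩)
      · exact ⟨hw, hwD⟩
      · exact ⟨hxS, fun hxd => hx (Or.inr hxd)⟩
    · rintro ⟨hxS, hxD⟩
      by_cases hxw : x = w
      · exact Or.inl hxw
      · exact Or.inr ⟨hxS, by rintro (h | h) <;> [exact hxw h; exact hxD h]⟩
  rw [VTBcond, hTeq]
  refine ⟨I0 \ {c}, ⟨⟨?_, ?_⟩, ?_⟩, ?_⟩
  · rintro x ⟨hxI, hxc⟩
    simp only [Set.mem_singleton_iff] at hxc
    have hxS : x ∈ S := by
      rcases hI0.1.1 hxI with h | h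
      · exact absurd h hxc
      · exact h
    refine ⟨hxS, fun hxD => hNI0 x hxI hxc (hD x hxD)⟩
  · exact fun a ha b hb => hI0.1.2 a ha.1 b hb.1
  · intro J hJ
    have hJT : VTIndepOn G ({c} ∪ S) J := ⟨fun x hx => Or.inr (hJ.1 hx).1, hJ.2⟩
    have hJle : J.ncard ≤ I0.ncard := hI0.2 J hJT
    have hcJ : c ∉ J := fun hcJ => hc (hJ.1 hcJ).1
    have hJne : J.ncard ≠ I0.ncard := by
      intro he
      exact hcJ (hA J ⟨hJT, fun K hK => he ▸ hI0.2 K hK⟩)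
    have h1 : 0 < I0.ncard := (Set.ncard_pos (Set.toFinite _)).mpr ⟨c, hcI⟩
    rw [Set.ncard_diff_singleton_of_mem hcI]
    omega
  · rintro ⟨hwI, -⟩
    exact hI0.1.2 c hcI w hwI hadj

lemma vt_Bcond_step [Fintype V] {G : SimpleGraph V} {c : V} {S : Set V}
    (hc : c ∉ S) (hB : VTBcond G c S) :
    ∃ u D, u ∈ S ∧ G.Adj c u ∧ (∀ x ∈ D, x ∈ S ∧ G.Adj c x ∧ x ≠ u) ∧
      VTAcond G u (S \ ({u} ∪ D)) := by
  classical
  set N : Set V := {x | G.Adj c x} with hN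
  obtain ⟨I, ⟨hImax, hcI⟩, hmin⟩ := Set.Finite.exists_minimalFor
      (fun I => (I ∩ N).ncard) {I | VTMaxIndepOn G ({c} ∪ S) I ∧ c ∉ I}
      (Set.toFinite _) hB
  have hIS : I ⊆ S := by
    intro x hx
    rcases hImax.1.1 hx with h | h
    · exact absurd h.symm (by rintro rfl; exact hcI hx)
    · exact h
  -- c has a neighbor in I
  have hInonempty : (I ∩ N).Nonempty := by
    by_contra hne
    rw [Set.not_nonempty_iff_eq_empty] at hne
    have hno : ∀ x ∈ I, ¬ G.Adj c x :=
      fun x hx h => (Set.eq_empty_iff_forall_notMem.mp hne x) ⟨hx, h⟩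
    have hins : VTIndepOn G ({c} ∪ S) (insert c I) := by
      refine ⟨by rintro x (rfl | hx); exacts [Or.inl rfl, Or.inr (hIS hx)], ?_⟩
      rintro a (rfl | ha) b (rfl | hb)
      · exact fun h => G.irrefl h
      · exact hno b hb
      · exact fun h => hno a ha h.symm
      · exact hImax.1.2 a ha b hb
    have := hImax.2 _ hins
    rw [Set.ncard_insert_of_notMem hcI (Set.toFinite _)] at this
    omega
  obtain ⟨u, huI, huN⟩ := hInonempty
  have hadj : G.Adj c u := huN
  refine ⟨u, (S ∩ N) \ I, hIS huI, hadj, ?_, ?_⟩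
  · rintro x ⟨⟨hxS, hxN⟩, hxI⟩
    exact ⟨hxS, hxN, fun h => hxI (h ▸ huI)⟩
  · -- A-condition for new position
    have huS : u ∈ S := hIS huI
    have huD : u ∉ (S ∩ N) \ I := fun h => h.2 huI
    have hTeq : {u} ∪ (S \ ({u} ∪ ((S ∩ N) \ I))) = S \ ((S ∩ N) \ I) := by
      ext x
      simp only [Set.mem_union, Set.mem_diff, Set.mem_singleton_iff]
      constructor
      · rintro (rfl | ⟨hxS, hx⟩)
        · exact ⟨huS, huD⟩
        · exact ⟨hxS, fun hxd => hx (Or.inr hxd)⟩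
      · rintro ⟨hxS, hxD⟩
        by_cases hxu : x = u
        · exact Or.inl hxu
        · exact Or.inr ⟨hxS, by rintro (h | h) <;> [exact hxu h; exact hxD h]⟩
    rw [VTAcond, hTeq]
    intro J hJ
    by_contra huJ
    have hID : I ⊆ S \ ((S ∩ N) \ I) := fun x hx => ⟨hIS hx, fun h => h.2 hx⟩
    have hIJ : I.ncard ≤ J.ncard := hJ.2 I ⟨hID, hImax.1.2⟩
    have hJT : VTIndepOn G ({c} ∪ S) J := ⟨fun x hx => Or.inr (hJ.1.1 hx).1, hJ.1.2⟩
    have hJI : J.ncard ≤ I.ncard := hImax.2 J hJT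
    have hJmax : VTMaxIndepOn G ({c} ∪ S) J :=
      ⟨hJT, fun K hK => le_trans (hImax.2 K hK) hIJ⟩
    have hcJ : c ∉ J := fun h => hc (hJ.1.1 h).1
    have hsub : J ∩ N ⊂ I ∩ N := by
      constructor
      · rintro x ⟨hxJ, hxN⟩
        obtain ⟨hxS, hxD⟩ := hJ.1.1 hxJ
        refine ⟨?_, hxN⟩
        by_contra hxI
        exact hxD ⟨⟨hxS, hxN⟩, hxI⟩
      · intro hsub
        exact huJ (hsub ⟨huI, huN⟩).1
    have hlt : (J ∩ N).ncard < (I ∩ N).ncard := Set.ncard_lt_ncard hsub (Set.toFinite _)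
    have : (I ∩ N).ncard ≤ (J ∩ N).ncard := hmin ⟨hJmax, hcJ⟩ hlt.le
    omega

section VTGame

variable [Fintype V]

def vtS (s : List V × Set V) : Set V := {x | x ∉ s.1 ∧ x ∉ s.2}

lemma mem_vtS {s : List V × Set V} {x : V} : x ∈ vtS s ↔ x ∉ s.1 ∧ x ∉ s.2 := Iff.rfl

def vtHeadA (G : SimpleGraph V) (s : List V × Set V) : Prop :=
  ∃ c, s.1.head? = some c ∧ VTAcond G c (vtS s)

def vtHeadB (G : SimpleGraph V) (s : List V × Set V) : Prop :=
  ∃ c, s.1.head? = some c ∧ VTBcond G c (vtS s)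

def VTGood (G : SimpleGraph V) (h : List V) (Dset : Set V) (p : V × Set V) : Prop :=
  VTrapLegal G h Dset p.1 ∧ p.2 ⊆ {x | VTrapLegal G h Dset x ∧ x ≠ p.1} ∧
    VTAcond G p.1 (vtS (h, Dset) \ ({p.1} ∪ p.2))

open Classical in
noncomputable def vtStrat (G : SimpleGraph V) (v0 : V) (h : List V) (Dset : Set V) :
    V × Set V :=
  if hx : ∃ p, VTGood G h Dset p then hx.choose else (v0, ∅)

lemma vtStrat_good {G : SimpleGraph V} {v0 : V} {h : List V} {Dset : Set V}
    (hx : ∃ p, VTGood G h Dset p) : VTGood G h Dset (vtStrat G v0 h Dset) := by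
  rw [vtStrat, dif_pos hx]
  exact hx.choose_spec

lemma vtHeadB_good {G : SimpleGraph V} {s : List V × Set V} (hB : vtHeadB G s) :
    ∃ p, VTGood G s.1 s.2 p := by
  obtain ⟨c, hc, hB⟩ := hB
  have hcS : c ∉ vtS s := fun h => h.1 (List.mem_of_mem_head? hc)
  obtain ⟨u, D, huS, hadj, hD, hA⟩ := vt_Bcond_step hcS hB
  refine ⟨(u, D), ⟨c, hc, hadj, huS.1, huS.2⟩, ?_, hA⟩
  intro x hx
  obtain ⟨hxS, hxadj, hxu⟩ := hD x hx
  exact ⟨⟨c, hc, hxadj, hxS.1, hxS.2⟩, hxu⟩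

lemma vtS_cons {s : List V × Set V} {w : V} {D : Set V} :
    vtS (w :: s.1, s.2 ∪ D) = vtS s \ ({w} ∪ D) := by
  ext x
  simp only [mem_vtS, vtS, Set.mem_diff, Set.mem_union, Set.mem_setOf_eq,
    List.mem_cons, Set.mem_singleton_iff]
  tauto

lemma vtHeadA_step {G : SimpleGraph V} {s : List V × Set V} (hA : vtHeadA G s)
    (m : V × Set V) (hleg : VTrapLegal G s.1 s.2 m.1) :
    vtHeadB G (m.1 :: s.1, s.2 ∪ (m.2 ∩ {x | VTrapLegal G s.1 s.2 x ∧ x ≠ m.1})) := by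
  obtain ⟨c, hc, hA⟩ := hA
  obtain ⟨c', hc', hadj, hw1, hw2⟩ := hleg
  rw [hc] at hc'
  obtain rfl : c = c' := Option.some_inj.mp hc'
  set D := m.2 ∩ {x | VTrapLegal G s.1 s.2 x ∧ x ≠ m.1} with hDdef
  have hcS : c ∉ vtS s := fun h => h.1 (List.mem_of_mem_head? hc)
  have hwS : m.1 ∈ vtS s := ⟨hw1, hw2⟩
  have hDadj : ∀ x ∈ D, G.Adj c x := by
    rintro x ⟨-, ⟨c'', hc'', hadj'', -, -⟩, -⟩
    rw [hc] at hc''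
    obtain rfl : c = c'' := Option.some_inj.mp hc''
    exact hadj''
  have hwD : m.1 ∉ D := fun h => h.2.2 rfl
  refine ⟨m.1, rfl, ?_⟩
  rw [vtS_cons]
  exact vt_Acond_step hA hcS hwS hadj hDadj hwD

lemma vtGood_step {G : SimpleGraph V} {s : List V × Set V} {p : V × Set V}
    (hp : VTGood G s.1 s.2 p) :
    vtHeadA G (p.1 :: s.1, s.2 ∪ (p.2 ∩ {x | VTrapLegal G s.1 s.2 x ∧ x ≠ p.1})) := by
  have hinter : p.2 ∩ {x | VTrapLegal G s.1 s.2 x ∧ x ≠ p.1} = p.2 :=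
    Set.inter_eq_left.mpr hp.2.1
  refine ⟨p.1, rfl, ?_⟩
  rw [hinter, vtS_cons]
  exact hp.2.2

lemma vtrapPlay_zero (G : SimpleGraph V) (σ τ : List V → Set V → V × Set V) (v : V) :
    vtrapPlay G σ τ v 0 = ([v], ∅) := rfl

open Classical in
lemma vtrapPlay_succ (G : SimpleGraph V) (σ τ : List V → Set V → V × Set V) (v : V) (n : ℕ) :
    vtrapPlay G σ τ v (n + 1) =
      (fun s : List V × Set V =>
        (fun m : V × Set V =>
          if VTrapLegal G s.1 s.2 m.1 then
            (m.1 :: s.1, s.2 ∪ (m.2 ∩ {x | VTrapLegal G s.1 s.2 x ∧ x ≠ m.1}))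
          else s)
        (if s.1.length % 2 = 1 then σ s.1 s.2 else τ s.1 s.2))
      (vtrapPlay G σ τ v n) := rfl

lemma vtrapPlay_nodup (G : SimpleGraph V) (σ τ : List V → Set V → V × Set V) (v : V) (n : ℕ) :
    (vtrapPlay G σ τ v n).1.Nodup := by
  classical
  induction n with
  | zero => simp [vtrapPlay_zero]
  | succ n ih =>
    rw [vtrapPlay_succ]
    set s := vtrapPlay G σ τ v n with hs
    set m := if s.1.length % 2 = 1 then σ s.1 s.2 else τ s.1 s.2 with hm
    show (if VTrapLegal G s.1 s.2 m.1 then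
        (m.1 :: s.1, s.2 ∪ (m.2 ∩ {x | VTrapLegal G s.1 s.2 x ∧ x ≠ m.1})) else s).1.Nodup
    split_ifs with hleg
    · obtain ⟨c, -, -, hmem, -⟩ := hleg
      exact List.nodup_cons.mpr ⟨hmem, ih⟩
    · exact ih

lemma vtrapPlay_freeze (G : SimpleGraph V) (σ τ : List V → Set V → V × Set V) (v : V) :
    ∃ n, vtrapPlay G σ τ v (n + 1) = vtrapPlay G σ τ v n := by
  classical
  by_contra hcon
  push_neg at hcon
  have hlen : ∀ n, (vtrapPlay G σ τ v n).1.length = n + 1 := by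
    intro n
    induction n with
    | zero => simp [vtrapPlay_zero]
    | succ n ih =>
      have hne := hcon n
      rw [vtrapPlay_succ] at hne ⊢
      set s := vtrapPlay G σ τ v n with hs
      set m := if s.1.length % 2 = 1 then σ s.1 s.2 else τ s.1 s.2 with hm
      show (if VTrapLegal G s.1 s.2 m.1 then
          (m.1 :: s.1, s.2 ∪ (m.2 ∩ {x | VTrapLegal G s.1 s.2 x ∧ x ≠ m.1})) else s).1.length
          = n + 1 + 1
      have hne' : (if VTrapLegal G s.1 s.2 m.1 then
          (m.1 :: s.1, s.2 ∪ (m.2 ∩ {x | VTrapLegal G s.1 s.2 x ∧ x ≠ m.1})) else s) ≠ s := hne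
      split_ifs with hleg
      · simp [ih]
      · rw [if_neg hleg] at hne'
        exact absurd rfl hne'
  have h1 := hlen (Fintype.card V)
  have h2 := (vtrapPlay_nodup G σ τ v (Fintype.card V)).length_le_card
  omega

/-- if the state is frozen at step n, the chosen move there was illegal. -/
lemma vtrapPlay_frozen_illegal (G : SimpleGraph V) (σ τ : List V → Set V → V × Set V)
    (v : V) (n : ℕ) (hfr : vtrapPlay G σ τ v (n + 1) = vtrapPlay G σ τ v n) :
    ¬ VTrapLegal G (vtrapPlay G σ τ v n).1 (vtrapPlay G σ τ v n).2
      ((if (vtrapPlay G σ τ v n).1.length % 2 = 1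
          then σ (vtrapPlay G σ τ v n).1 (vtrapPlay G σ τ v n).2
          else τ (vtrapPlay G σ τ v n).1 (vtrapPlay G σ τ v n).2).1) := by
  classical
  intro hleg
  rw [vtrapPlay_succ] at hfr
  set s := vtrapPlay G σ τ v n with hs
  set m := if s.1.length % 2 = 1 then σ s.1 s.2 else τ s.1 s.2 with hm
  have hfr' : (if VTrapLegal G s.1 s.2 m.1 then
      (m.1 :: s.1, s.2 ∪ (m.2 ∩ {x | VTrapLegal G s.1 s.2 x ∧ x ≠ m.1})) else s) = s := hfr
  rw [if_pos hleg] at hfr'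
  have := congrArg (fun t : List V × Set V => t.1.length) hfr'
  simp at this

open Classical in
lemma vtrapPlay_succ' (G : SimpleGraph V) (σ τ : List V → Set V → V × Set V) (v : V) (n : ℕ) :
    vtrapPlay G σ τ v (n + 1) =
      if VTrapLegal G (vtrapPlay G σ τ v n).1 (vtrapPlay G σ τ v n).2
          ((if (vtrapPlay G σ τ v n).1.length % 2 = 1
              then σ (vtrapPlay G σ τ v n).1 (vtrapPlay G σ τ v n).2
              else τ (vtrapPlay G σ τ v n).1 (vtrapPlay G σ τ v n).2).1) then
        ((if (vtrapPlay G σ τ v n).1.length % 2 = 1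
            then σ (vtrapPlay G σ τ v n).1 (vtrapPlay G σ τ v n).2
            else τ (vtrapPlay G σ τ v n).1 (vtrapPlay G σ τ v n).2).1 :: (vtrapPlay G σ τ v n).1,
          (vtrapPlay G σ τ v n).2 ∪
            ((if (vtrapPlay G σ τ v n).1.length % 2 = 1
                then σ (vtrapPlay G σ τ v n).1 (vtrapPlay G σ τ v n).2
                else τ (vtrapPlay G σ τ v n).1 (vtrapPlay G σ τ v n).2).2 ∩
              {x | VTrapLegal G (vtrapPlay G σ τ v n).1 (vtrapPlay G σ τ v n).2 x ∧
                x ≠ (if (vtrapPlay G σ τ v n).1.length % 2 = 1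
                  then σ (vtrapPlay G σ τ v n).1 (vtrapPlay G σ τ v n).2
                  else τ (vtrapPlay G σ τ v n).1 (vtrapPlay G σ τ v n).2).1}))
      else vtrapPlay G σ τ v n := rfl

lemma vt_invariant_tau (G : SimpleGraph V) (v : V) (σ : List V → Set V → V × Set V)
    (hA0 : vtHeadA G (([v], ∅) : List V × Set V)) (n : ℕ) :
    ((vtrapPlay G σ (vtStrat G v) v n).1.length % 2 = 1 →
      vtHeadA G (vtrapPlay G σ (vtStrat G v) v n)) ∧
    ((vtrapPlay G σ (vtStrat G v) v n).1.length % 2 = 0 →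
      vtHeadB G (vtrapPlay G σ (vtStrat G v) v n)) := by
  classical
  induction n with
  | zero =>
    refine ⟨fun _ => hA0, fun h => ?_⟩
    rw [vtrapPlay_zero] at h
    simp at h
  | succ n ih =>
    rw [vtrapPlay_succ']
    set s := vtrapPlay G σ (vtStrat G v) v n with hs
    set m := if s.1.length % 2 = 1 then σ s.1 s.2 else vtStrat G v s.1 s.2 with hm
    rcases Nat.mod_two_eq_zero_or_one s.1.length with hpar | hpar
    · -- even length: the strategist's (τ's) turn
      have hB := ih.2 hpar
      have hm' : m = vtStrat G v s.1 s.2 := by rw [hm, if_neg (by omega)]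
      have hgood : VTGood G s.1 s.2 m := by
        rw [hm']; exact vtStrat_good (vtHeadB_good hB)
      rw [if_pos hgood.1]
      refine ⟨fun _ => vtGood_step hgood, fun hlen => ?_⟩
      exfalso
      simp only [List.length_cons] at hlen
      omega
    · -- odd length: σ's turn, arbitrary move
      have hA := ih.1 hpar
      split_ifs with hleg
      · refine ⟨fun hlen => ?_, fun _ => vtHeadA_step hA m hleg⟩
        exfalso
        simp only [List.length_cons] at hlen
        omega
      · exact ih

lemma vt_invariant_sigma (G : SimpleGraph V) (v : V) (τ : List V → Set V → V × Set V)
    (hB0 : vtHeadB G (([v], ∅) : List V × Set V)) (n : ℕ) :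
    ((vtrapPlay G (vtStrat G v) τ v n).1.length % 2 = 1 →
      vtHeadB G (vtrapPlay G (vtStrat G v) τ v n)) ∧
    ((vtrapPlay G (vtStrat G v) τ v n).1.length % 2 = 0 →
      vtHeadA G (vtrapPlay G (vtStrat G v) τ v n)) := by
  classical
  induction n with
  | zero =>
    refine ⟨fun _ => hB0, fun h => ?_⟩
    rw [vtrapPlay_zero] at h
    simp at h
  | succ n ih =>
    rw [vtrapPlay_succ']
    set s := vtrapPlay G (vtStrat G v) τ v n with hs
    set m := if s.1.length % 2 = 1 then vtStrat G v s.1 s.2 else τ s.1 s.2 with hm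
    rcases Nat.mod_two_eq_zero_or_one s.1.length with hpar | hpar
    · -- even length: τ's turn, arbitrary move
      have hA := ih.2 hpar
      split_ifs with hleg
      · refine ⟨fun _ => vtHeadA_step hA m hleg, fun hlen => ?_⟩
        exfalso
        simp only [List.length_cons] at hlen
        omega
      · exact ih
    · -- odd length: the strategist's (σ's) turn
      have hB := ih.1 hpar
      have hm' : m = vtStrat G v s.1 s.2 := by rw [hm, if_pos hpar]
      have hgood : VTGood G s.1 s.2 m := by
        rw [hm']; exact vtStrat_good (vtHeadB_good hB)
      rw [if_pos hgood.1]
      refine ⟨fun hlen => ?_, fun _ => vtGood_step hgood⟩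
      exfalso
      simp only [List.length_cons] at hlen
      omega

lemma vt_univ_eq (v : V) : ({v} ∪ vtS (([v], ∅) : List V × Set V) : Set V) = Set.univ := by
  ext x
  simp only [Set.mem_union, Set.mem_singleton_iff, mem_vtS, List.mem_singleton,
    Set.mem_empty_iff_false, not_false_iff, and_true, Set.mem_univ, iff_true]
  tauto

end VTGame

/-- On a finite connected simple graph, the first player loses
Vicious Trap from `v` (i.e. the second player has a winning strategy) if and
only if `v` is contained in every maximum independent set of `G`. -/
theorem vtrap_firstLoses_iff_mem_every_maxIndep [Fintype V]
    (G : SimpleGraph V) (hG : G.Connected) (v : V) :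
    VTrapSecondWins G v ↔ ∀ I : Set V, IsMaxIndep G I → v ∈ I := by
  classical
  constructor
  · rintro ⟨τ, hτ⟩ I hImax
    by_contra hvI
    have hB0 : vtHeadB G (([v], ∅) : List V × Set V) := by
      refine ⟨v, rfl, ?_⟩
      rw [VTBcond, vt_univ_eq]
      exact ⟨I, ⟨⟨Set.subset_univ _, hImax.1⟩, fun J hJ => hImax.2 J hJ.2⟩, hvI⟩
    obtain ⟨n, hodd, hnl⟩ := hτ (vtStrat G v)
    have hB := (vt_invariant_sigma G v τ hB0 n).1 hodd
    have hgood := vtStrat_good (v0 := v) (vtHeadB_good hB)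
    exact hnl hgood.1
  · intro hv
    refine ⟨vtStrat G v, fun σ => ?_⟩
    have hA0 : vtHeadA G (([v], ∅) : List V × Set V) := by
      refine ⟨v, rfl, ?_⟩
      rw [VTAcond, vt_univ_eq]
      intro I hI
      exact hv I ⟨hI.1.2, fun J hJ => hI.2 J ⟨Set.subset_univ _, hJ⟩⟩
    obtain ⟨n, hfr⟩ := vtrapPlay_freeze G σ (vtStrat G v) v
    have hill := vtrapPlay_frozen_illegal G σ (vtStrat G v) v n hfr
    rcases Nat.mod_two_eq_zero_or_one (vtrapPlay G σ (vtStrat G v) v n).1.length with hpar | hpar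
    · exfalso
      have hB := (vt_invariant_tau G v σ hA0 n).2 hpar
      have hgood := vtStrat_good (v0 := v) (vtHeadB_good hB)
      rw [if_neg (by omega)] at hill
      exact hill hgood.1
    · refine ⟨n, hpar, ?_⟩
      rw [if_pos hpar] at hill
      exact hill
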